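/- arXiv:1902.01786 — 2 statements merged into one kernel-verified Lean document; each statement's English description precedes it below -/
import Mathlib

section
/- Let T > 0. For i ∈ {1, 2}, let z_hi_i : [0, T] → ℝ and z_des_i : [0, T] → ℝ be absolutely continuous functions with z_hi_i(0) = z_des_i(0), and let g_i : [0, T] → ℝ be integrable with g_i(t) ≥ 0 for all t, such that for almost every t ∈ [0, T], |ż_hi_i(t) − ż_des_i(t)| ≤ g_i(t). Then there exist measurable functions d_1, d_2 : [0, T] → [−1, 1] such that for every t ∈ [0, T] and each i ∈ {1, 2}, z_hi_i(t) = z_hi_i(0) + ∫₀ᵗ (ż_des_i(τ) + g_i(τ)·d_i(τ)) dτ. -/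
open MeasureTheory Set

/-- Lemma 1 of the paper: the high-fidelity model matches the trajectory-producing
model in the shared states.  The absolutely continuous trajectories `zhi i` and
`zdes i` are represented via their integrable derivatives `f i` and `h i`
(fundamental theorem of calculus representation of absolute continuity). -/
theorem high_fidelity_matches_trajectory_producing
    (T : ℝ) (hT : 0 < T)
    (zhi zdes : Fin 2 → ℝ → ℝ) (f h g : Fin 2 → ℝ → ℝ)
    (hf : ∀ i, IntegrableOn (f i) (Icc 0 T))
    (hh : ∀ i, IntegrableOn (h i) (Icc 0 T))
    (hg : ∀ i, IntegrableOn (g i) (Icc 0 T))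
    (hg_nonneg : ∀ i, ∀ t ∈ Icc (0:ℝ) T, 0 ≤ g i t)
    (hzhi : ∀ i, ∀ t ∈ Icc (0:ℝ) T, zhi i t = zhi i 0 + ∫ τ in (0:ℝ)..t, f i τ)
    (hzdes : ∀ i, ∀ t ∈ Icc (0:ℝ) T, zdes i t = zdes i 0 + ∫ τ in (0:ℝ)..t, h i τ)
    (h0 : ∀ i, zhi i 0 = zdes i 0)
    (hbound : ∀ i, ∀ᵐ t ∂(volume.restrict (Icc (0:ℝ) T)), |f i t - h i t| ≤ g i t) :
    ∃ d : Fin 2 → ℝ → ℝ,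
      (∀ i, Measurable (d i)) ∧
      (∀ i, ∀ t, d i t ∈ Icc (-1:ℝ) 1) ∧
      (∀ i, ∀ t ∈ Icc (0:ℝ) T,
        zhi i t = zhi i 0 + ∫ τ in (0:ℝ)..t, (h i τ + g i τ * d i τ)) := by
  -- measurable representatives of f, h, g on [0, T]
  set F : Fin 2 → ℝ → ℝ := fun i => (hf i).1.mk (f i) with hF_def
  set H : Fin 2 → ℝ → ℝ := fun i => (hh i).1.mk (h i) with hH_def
  set G : Fin 2 → ℝ → ℝ := fun i => (hg i).1.mk (g i) with hG_def
  have hFm : ∀ i, Measurable (F i) := fun i => (hf i).1.stronglyMeasurable_mk.measurable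
  have hHm : ∀ i, Measurable (H i) := fun i => (hh i).1.stronglyMeasurable_mk.measurable
  have hGm : ∀ i, Measurable (G i) := fun i => (hg i).1.stronglyMeasurable_mk.measurable
  refine ⟨fun i t => max (-1) (min 1 ((F i t - H i t) / G i t)), ?_, ?_, ?_⟩
  · intro i
    exact measurable_const.max (measurable_const.min (((hFm i).sub (hHm i)).div (hGm i)))
  · intro i t
    constructor
    · exact le_max_left _ _
    · exact max_le (by norm_num) (min_le_left _ _)
  · intro i t ht
    -- key a.e. identity on [0, T]
    have key : ∀ᵐ τ ∂(volume.restrict (Icc (0:ℝ) T)),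
        h i τ + g i τ * max (-1) (min 1 ((F i τ - H i τ) / G i τ)) = f i τ := by
      filter_upwards [hbound i, (hf i).1.ae_eq_mk, (hh i).1.ae_eq_mk, (hg i).1.ae_eq_mk,
        ae_restrict_mem measurableSet_Icc] with τ hb hFe hHe hGe hmem
      have hgnn : 0 ≤ g i τ := hg_nonneg i τ hmem
      simp only [hF_def, hH_def, hG_def, ← hFe, ← hHe, ← hGe]
      rcases eq_or_lt_of_le hgnn with hg0 | hgpos
      · have hfh : f i τ = h i τ := by
          have : |f i τ - h i τ| ≤ 0 := by rw [hg0]; exact hb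
          have := abs_nonpos_iff.mp this
          linarith
        rw [← hg0, hfh]; ring
      · have hr : (f i τ - h i τ) / g i τ ∈ Icc (-1:ℝ) 1 := by
          rw [abs_le] at hb
          constructor
          · rw [le_div_iff₀ hgpos]; linarith [hb.1]
          · rw [div_le_one hgpos]; exact hb.2
        rw [min_eq_right hr.2, max_eq_right hr.1, mul_div_cancel₀ _ (ne_of_gt hgpos)]
        ring
    -- transfer to an integral equality on [0, t]
    have key' : ∀ᵐ τ ∂volume, τ ∈ Icc (0:ℝ) T →
        h i τ + g i τ * max (-1) (min 1 ((F i τ - H i τ) / G i τ)) = f i τ :=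
      (ae_restrict_iff' measurableSet_Icc).mp key
    have hsub : Ioc (0:ℝ) t ⊆ Icc (0:ℝ) T := fun τ hτ =>
      ⟨le_of_lt hτ.1, hτ.2.trans ht.2⟩
    have hint : (∫ τ in (0:ℝ)..t, (h i τ + g i τ * max (-1) (min 1 ((F i τ - H i τ) / G i τ))))
        = ∫ τ in (0:ℝ)..t, f i τ := by
      rw [intervalIntegral.integral_of_le ht.1, intervalIntegral.integral_of_le ht.1]
      refine setIntegral_congr_ae measurableSet_Ioc ?_
      filter_upwards [key'] with τ hτ hτmem
      exact hτ (hsub hτmem)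
    rw [hint]
    exact hzhi i t ht
end

section
/- Let v_max > 0, ε ≥ 0, τ_plan ≥ 0, and T ≥ 0, and let D_sense be a real number with D_sense ≥ (T + τ_plan)·v_max + 2ε. Let z : [0, T + τ_plan] → ℝ² satisfy ‖z(t) − z(s)‖ ≤ v_max·|t − s| for all s, t ∈ [0, T + τ_plan] (the vehicle's position moves at speed at most v_max), let ẑ ∈ ℝ² satisfy ‖ẑ − z(0)‖ ≤ ε (the state estimate is within ε of the true initial position), and let p ∈ ℝ² satisfy ‖p − ẑ‖ > D_sense (a point outside the sensor horizon). Then for every t ∈ [0, T + τ_plan], ‖z(t) − p‖ > ε; in particular, since ε ≥ 0, the vehicle's position never reaches p during the combined planning and execution horizon. -/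
open Set

/-- Quantitative core of Lemma 3 of the paper (persistent feasibility via the sensor
horizon): if `D_sense ≥ (T + τ_plan)·v_max + 2ε`, the vehicle moves at speed at most
`v_max`, the state estimate `zhat` is within `ε` of the true initial position, and `p`
lies outside the sensor horizon (`‖p − zhat‖ > D_sense`), then the vehicle stays more
than `ε` away from `p` throughout the combined planning and execution horizon. -/
theorem sensor_horizon_persistent_feasibility
    (vmax ε τplan T Dsense : ℝ)
    (hvmax : 0 < vmax) (hε : 0 ≤ ε) (hτ : 0 ≤ τplan) (hT : 0 ≤ T)
    (hD : Dsense ≥ (T + τplan) * vmax + 2 * ε)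
    (z : ℝ → EuclideanSpace ℝ (Fin 2))
    (hz : ∀ s ∈ Icc (0:ℝ) (T + τplan), ∀ t ∈ Icc (0:ℝ) (T + τplan),
      ‖z t - z s‖ ≤ vmax * |t - s|)
    (zhat p : EuclideanSpace ℝ (Fin 2))
    (hzhat : ‖zhat - z 0‖ ≤ ε) (hp : ‖p - zhat‖ > Dsense) :
    ∀ t ∈ Icc (0:ℝ) (T + τplan), ‖z t - p‖ > ε := by
  intro t ht
  have h0 : (0:ℝ) ∈ Icc (0:ℝ) (T + τplan) := ⟨le_refl 0, by linarith [ht.1, ht.2]⟩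
  have hmove : ‖z t - z 0‖ ≤ vmax * (T + τplan) := by
    have := hz 0 h0 t ht
    have habs : |t - 0| ≤ T + τplan := by
      rw [sub_zero, abs_of_nonneg ht.1]; exact ht.2
    calc ‖z t - z 0‖ ≤ vmax * |t - 0| := this
      _ ≤ vmax * (T + τplan) := by nlinarith
  have htri : ‖p - zhat‖ ≤ ‖p - z t‖ + ‖z t - z 0‖ + ‖z 0 - zhat‖ := by
    calc ‖p - zhat‖ = ‖(p - z t) + (z t - z 0) + (z 0 - zhat)‖ := by abel_nf
      _ ≤ ‖(p - z t) + (z t - z 0)‖ + ‖z 0 - zhat‖ := norm_add_le _ _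
      _ ≤ ‖p - z t‖ + ‖z t - z 0‖ + ‖z 0 - zhat‖ := by
          gcongr; exact norm_add_le _ _
  have h1 : ‖z 0 - zhat‖ = ‖zhat - z 0‖ := norm_sub_rev _ _
  have h2 : ‖p - z t‖ = ‖z t - p‖ := norm_sub_rev _ _
  nlinarith [htri, hmove, hzhat, hp, hD]
end
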